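/- arXiv:2305.16672 — 3 statements merged into one kernel-verified Lean document; each statement's English description precedes it below -/
import Mathlib

section
/- Let d ≥ 1, p ∈ [1,∞), let Ω ⊆ ℝ^d be open, let H be a polarizer, and let u : ℝ^d → [0,∞) be measurable with u = 0 on ℝ^d \ Ω. If u ∈ L^p(Ω), then P_H(u) ∈ L^p(P_H(Ω)), P_H(u) = 0 on ℝ^d \ P_H(Ω), and ‖P_H(u)‖_{L^p(P_H(Ω))} = ‖u‖_{L^p(Ω)}. -/
open MeasureTheory Metric Set ENNReal

noncomputable section

/-- `d`-dimensional Euclidean space. -/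
abbrev Euc (d : ℕ) : Type := EuclideanSpace ℝ (Fin d)

/-- The open affine half-space (polarizer) `{x : ⟪x, h⟫ < a}`. -/
def halfSpace {d : ℕ} (h : Euc d) (a : ℝ) : Set (Euc d) :=
  {x : Euc d | (inner ℝ x h : ℝ) < a}

/-- Reflection across the affine hyperplane `{x : ⟪x, h⟫ = a}`:
`σ_H x = x - 2(⟪x,h⟫ - a) h`. -/
def reflH {d : ℕ} (h : Euc d) (a : ℝ) (x : Euc d) : Euc d :=
  x - (2 * ((inner ℝ x h : ℝ) - a)) • h

/-- Polarization of a set with respect to the polarizer `H = {x : ⟪x,h⟫ < a}`. -/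
def polSet {d : ℕ} (h : Euc d) (a : ℝ) (Ω : Set (Euc d)) : Set (Euc d) :=
  ((Ω ∪ reflH h a '' Ω) ∩ halfSpace h a) ∪ (Ω ∩ reflH h a '' Ω)

/-- Dual polarization of a set. -/
def polSetDual {d : ℕ} (h : Euc d) (a : ℝ) (Ω : Set (Euc d)) : Set (Euc d) :=
  ((Ω ∪ reflH h a '' Ω) ∩ (halfSpace h a)ᶜ) ∪ (Ω ∩ reflH h a '' Ω)

/-- Polarization of a function. -/
def polFun {d : ℕ} (h : Euc d) (a : ℝ) (u : Euc d → ℝ) (x : Euc d) : ℝ :=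
  if (inner ℝ x h : ℝ) < a then max (u x) (u (reflH h a x)) else min (u x) (u (reflH h a x))

/-- The `p`-th power of the Gagliardo seminorm `[u]_{s,p}^p`. -/
def gagP (d : ℕ) (s p : ℝ) (u : Euc d → ℝ) : ℝ≥0∞ :=
  ∫⁻ z : Euc d × Euc d, ENNReal.ofReal (|u z.1 - u z.2| ^ p / dist z.1 z.2 ^ ((d : ℝ) + s * p))

/-- Membership in the fractional Sobolev space `W^{s,p}_0(Ω)`. -/
def memW0 (d : ℕ) (s p : ℝ) (Ω : Set (Euc d)) (u : Euc d → ℝ) : Prop :=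
  MemLp u (ENNReal.ofReal p) (volume : Measure (Euc d)) ∧
  gagP d s p u < ⊤ ∧
  ∀ᵐ x : Euc d, x ∉ Ω → u x = 0

/-- The first `q`-eigenvalue `λ^s_{p,q}(Ω) = inf {[u]_{s,p}^p : u ∈ W^{s,p}_0(Ω), ‖u‖_{L^q(Ω)} = 1}`. -/
def lamSPQ (d : ℕ) (s p q : ℝ) (Ω : Set (Euc d)) : ℝ≥0∞ :=
  sInf { l : ℝ≥0∞ | ∃ u : Euc d → ℝ, memW0 d s p Ω u ∧
    (∫⁻ x in Ω, ENNReal.ofReal (|u x| ^ q)) = 1 ∧ l = gagP d s p u }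

/-- `q ∈ [1, p*_s)` where `p*_s = dp/(d - sp)` if `sp < d` and `p*_s = ∞` otherwise. -/
def subcritical (d : ℕ) (s p q : ℝ) : Prop :=
  1 ≤ q ∧ (s * p < (d : ℝ) → q < ((d : ℝ) * p) / ((d : ℝ) - s * p))

/-- The first standard basis vector `e₁` of `ℝ^d`. -/
def e1Vec (d : ℕ) : Euc d :=
  (EuclideanSpace.equiv (Fin d) ℝ).symm (fun i => if (i : ℕ) = 0 then 1 else 0)

/-- The annular domain `Ω_t = B_R(0) \ cl(B_r(t e₁))`. -/
def annulus (d : ℕ) (r R t : ℝ) : Set (Euc d) :=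
  ball (0 : Euc d) R \ closure (ball (t • e1Vec d) r)

/-- `Ω` has a boundary of class `C^{1,1}`: near each boundary point, `Ω` is (in suitable
coordinates) the region below the graph of a `C^1` function with Lipschitz derivative,
and the boundary is the graph. -/
def HasC11Boundary {d : ℕ} (Ω : Set (Euc d)) : Prop :=
  ∀ x ∈ frontier Ω, ∃ (ν : Euc d) (r : ℝ) (f : Euc d → ℝ) (K : NNReal),
    ‖ν‖ = 1 ∧ 0 < r ∧ ContDiff ℝ 1 f ∧ LipschitzWith K (fderiv ℝ f) ∧
    ∀ y ∈ ball x r,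
      (y ∈ Ω ↔ (inner ℝ y ν : ℝ) < f (y - ((inner ℝ y ν : ℝ)) • ν)) ∧
      (y ∈ frontier Ω ↔ (inner ℝ y ν : ℝ) = f (y - ((inner ℝ y ν : ℝ)) • ν))

/-- `G(t) = |t|^{p-2} t`. -/
def Gp (p t : ℝ) : ℝ := |t| ^ (p - 2) * t

/-- Steiner symmetry with respect to the hyperplane `{x₁ = 0}`, characterized via
polarizations by half-spaces `H_a = {x : x₁ < a}`. -/
def SteinerSymmE1 (d : ℕ) (A : Set (Euc d)) : Prop :=
  (∀ a : ℝ, 0 ≤ a → polSet (e1Vec d) a A = A) ∧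
  (∀ a : ℝ, a ≤ 0 → polSetDual (e1Vec d) a A = A)

/-- Foliated Schwarz symmetry with respect to the ray `c + ℝ⁺ η`, characterized via
polarizations by half-spaces containing the ray with `c` on the boundary hyperplane. -/
def FoliatedSchwarzSymm (d : ℕ) (c η : Euc d) (A : Set (Euc d)) : Prop :=
  ∀ (h : Euc d) (b : ℝ), ‖h‖ = 1 →
    (∀ t : ℝ, 0 < t → c + t • η ∈ halfSpace h b) → (inner ℝ c h : ℝ) = b →
    polSet h b A = A

/-- The simple rotation with plane of rotation `span{η, ξ}` and angle `θ`, fixing the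
orthogonal complement of the plane pointwise. -/
def rotMap (d : ℕ) (η ξ : Euc d) (θ : ℝ) (x : Euc d) : Euc d :=
  x - (inner ℝ x η : ℝ) • η - (inner ℝ x ξ : ℝ) • ξ
    + (Real.cos θ * (inner ℝ x η : ℝ) - Real.sin θ * (inner ℝ x ξ : ℝ)) • η
    + (Real.sin θ * (inner ℝ x η : ℝ) + Real.cos θ * (inner ℝ x ξ : ℝ)) • ξ
section AuxPol
variable {d : ℕ} (h : Euc d) (a : ℝ)


lemma inner_reflH (hh : ‖h‖ = 1) (x : Euc d) :
    (inner ℝ (reflH h a x) h : ℝ) = 2*a - inner ℝ x h := by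
  have h1 : (inner ℝ h h : ℝ) = 1 := by
    rw [real_inner_self_eq_norm_sq, hh]; norm_num
  simp only [reflH, inner_sub_left, real_inner_smul_left, h1]
  ring

lemma reflH_reflH (hh : ‖h‖ = 1) (x : Euc d) :
    reflH h a (reflH h a x) = x := by
  have h1 := inner_reflH h a hh x
  conv_lhs => rw [reflH, h1, reflH]
  module

lemma measurePreserving_reflH (hh : ‖h‖ = 1) :
    MeasurePreserving (reflH h a) (volume : Measure (Euc d)) volume := by
  have hR : ∀ x : Euc d, (((ℝ ∙ h)ᗮ).reflection x : Euc d)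
      = x - (2 * (inner ℝ x h : ℝ)) • h := by
    intro x
    rw [Submodule.reflection_orthogonal_apply, Submodule.reflection_singleton_apply, hh,
      real_inner_comm h x]
    push_cast
    module
  have key : reflH h a = (fun y => y + (2*a) • h) ∘ (((ℝ ∙ h)ᗮ).reflection : Euc d ≃ₗᵢ[ℝ] Euc d) := by
    funext x
    simp only [Function.comp_apply, hR, reflH]
    module
  rw [key]
  exact (measurePreserving_add_right volume _).comp
    (LinearIsometryEquiv.measurePreserving _)

lemma hyperplane_null (hh : ‖h‖ = 1) :
    volume {x : Euc d | (inner ℝ x h : ℝ) = a} = 0 := by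
  set L : Euc d →ₗ[ℝ] ℝ := (innerSL ℝ h).toLinearMap with hL
  have hker : LinearMap.ker L ≠ ⊤ := by
    intro htop
    have : L h = 0 := by
      rw [← LinearMap.mem_ker, htop]; trivial
    rw [hL] at this
    simp only [ContinuousLinearMap.coe_coe, innerSL_apply_apply] at this
    rw [real_inner_self_eq_norm_sq, hh] at this
    norm_num at this
  have hne : AffineSubspace.mk' (a • h) (LinearMap.ker L) ≠ (⊤ : AffineSubspace ℝ (Euc d)) := by
    intro htop
    apply hker
    have := AffineSubspace.direction_mk' (a • h) (LinearMap.ker L)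
    rw [htop, AffineSubspace.direction_top] at this
    exact this.symm
  refine measure_mono_null ?_ (Measure.addHaar_affineSubspace volume _ hne)
  intro x hx
  rw [SetLike.mem_coe, AffineSubspace.mem_mk']
  simp only [vsub_eq_sub, LinearMap.mem_ker, hL, ContinuousLinearMap.coe_coe, innerSL_apply_apply,
    inner_sub_right, real_inner_smul_right]
  have h1 : (inner ℝ h h : ℝ) = 1 := by rw [real_inner_self_eq_norm_sq, hh]; norm_num
  have hx' : (inner ℝ x h : ℝ) = a := hx
  have hc : (inner ℝ h x : ℝ) = a := by rw [real_inner_comm]; exact hx'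
  rw [hc, h1]
  ring


lemma maxmin_rpow (s t p : ℝ) :
    ENNReal.ofReal (max s t ^ p) + ENNReal.ofReal (min s t ^ p)
      = ENNReal.ofReal (s ^ p) + ENNReal.ofReal (t ^ p) := by
  rcases le_total s t with hle | hle
  · rw [max_eq_right hle, min_eq_left hle, add_comm]
  · rw [max_eq_left hle, min_eq_right hle]

lemma setLIntegral_of_zero_off {s : Set (Euc d)} (hs : MeasurableSet s)
    {f : Euc d → ℝ≥0∞} (hf : ∀ x, x ∉ s → f x = 0) :
    ∫⁻ x in s, f x = ∫⁻ x, f x := by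
  conv_rhs => rw [← lintegral_add_compl f hs]
  have hz : ∀ᵐ x ∂(volume.restrict sᶜ), f x = 0 :=
    (ae_restrict_iff' hs.compl).2 (ae_of_all _ fun x hx => hf x hx)
  rw [lintegral_congr_ae hz]
  simp

end AuxPol

/-- **Invariance of the `L^p` norm under polarization.**
If `u ≥ 0` is measurable, vanishes off `Ω`, and `u ∈ L^p(Ω)`, then `P_H(u)` vanishes
off `P_H(Ω)`, belongs to `L^p(P_H(Ω))`, and `‖P_H(u)‖_{L^p(P_H(Ω))} = ‖u‖_{L^p(Ω)}`. -/
theorem lp_norm_polarization (d : ℕ) (hd : 1 ≤ d) (p : ℝ) (hp : 1 ≤ p)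
    (Ω : Set (Euc d)) (hΩ : IsOpen Ω)
    (h : Euc d) (a : ℝ) (hh : ‖h‖ = 1)
    (u : Euc d → ℝ) (hum : Measurable u) (hupos : ∀ x, 0 ≤ u x)
    (hu0 : ∀ x, x ∉ Ω → u x = 0)
    (huLp : (∫⁻ x in Ω, ENNReal.ofReal (u x ^ p)) < ⊤) :
    (∀ x, x ∉ polSet h a Ω → polFun h a u x = 0) ∧
    (∫⁻ x in polSet h a Ω, ENNReal.ofReal (polFun h a u x ^ p)) < ⊤ ∧
    (∫⁻ x in polSet h a Ω, ENNReal.ofReal (polFun h a u x ^ p))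
      = ∫⁻ x in Ω, ENNReal.ofReal (u x ^ p) := by
  classical
  have hp0 : p ≠ 0 := by positivity
  set σ : Euc d → Euc d := reflH h a with hσdef
  have hσσ : ∀ x, σ (σ x) = x := reflH_reflH h a hh
  have hσmp : MeasurePreserving σ (volume : Measure (Euc d)) volume :=
    measurePreserving_reflH h a hh
  have hσmeas : Measurable σ := hσmp.measurable
  have hmemimg : ∀ x, x ∈ σ '' Ω ↔ σ x ∈ Ω := by
    intro x
    constructor
    · rintro ⟨y, hy, rfl⟩; rwa [hσσ]
    · intro hx; exact ⟨σ x, hx, hσσ x⟩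
  -- part 1: vanishing
  have hvanish : ∀ x, x ∉ polSet h a Ω → polFun h a u x = 0 := by
    intro x hx
    rw [polFun]
    by_cases hxH : (inner ℝ x h : ℝ) < a
    · rw [if_pos hxH]
      have hx1 : x ∉ Ω ∪ σ '' Ω := by
        intro hmem
        exact hx (Or.inl ⟨hmem, hxH⟩)
      have hux : u x = 0 := hu0 x fun hc => hx1 (Or.inl hc)
      have huσ : u (σ x) = 0 := hu0 _ fun hc => hx1 (Or.inr ((hmemimg x).2 hc))
      rw [hux, huσ, max_self]
    · rw [if_neg hxH]
      have hx2 : ¬ (x ∈ Ω ∧ x ∈ σ '' Ω) := fun hc => hx (Or.inr hc)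
      rcases not_and_or.1 hx2 with hc | hc
      · rw [hu0 x hc]
        exact min_eq_left (hupos _)
      · have : σ x ∉ Ω := fun hm => hc ((hmemimg x).2 hm)
        rw [hu0 _ this]
        exact min_eq_right (hupos _)
  -- measurability / topology
  have hinner : Continuous fun x : Euc d => (inner ℝ x h : ℝ) :=
    continuous_id.inner continuous_const
  have hHopen : IsOpen (halfSpace h a) := isOpen_Iio.preimage hinner
  have hHmeas : MeasurableSet (halfSpace h a) := hHopen.measurableSet
  have hBmeas : MeasurableSet {x : Euc d | a < (inner ℝ x h : ℝ)} :=
    (isOpen_Ioi.preimage hinner).measurableSet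
  have hσcont : Continuous σ := by
    have : Continuous fun x : Euc d => x - (2 * ((inner ℝ x h : ℝ) - a)) • h :=
      continuous_id.sub ((continuous_const.mul (hinner.sub continuous_const)).smul
        continuous_const)
    exact this
  have himg_eq : σ '' Ω = σ ⁻¹' Ω := by
    ext x
    rw [Set.mem_preimage, hmemimg]
  have hpolopen : IsOpen (polSet h a Ω) := by
    rw [polSet, himg_eq]
    exact ((hΩ.union (hΩ.preimage hσcont)).inter hHopen).union
      (hΩ.inter (hΩ.preimage hσcont))
  have hpolmeas : MeasurableSet (polSet h a Ω) := hpolopen.measurableSet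
  -- the two integrands
  set F : Euc d → ℝ≥0∞ := fun x => ENNReal.ofReal (u x ^ p) with hF
  set G : Euc d → ℝ≥0∞ := fun x => ENNReal.ofReal (polFun h a u x ^ p) with hG
  have hrpow : Measurable fun t : ℝ => t ^ p :=
    (continuous_iff_continuousAt.2 fun x =>
      Real.continuousAt_rpow_const x p (Or.inr (by linarith))).measurable
  have hFmeas : Measurable F := (hrpow.comp hum).ennreal_ofReal
  have humax : Measurable fun x => ENNReal.ofReal (max (u x) (u (σ x)) ^ p) :=
    (hrpow.comp (hum.max (hum.comp hσmeas))).ennreal_ofReal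
  have humin : Measurable fun x => ENNReal.ofReal (min (u x) (u (σ x)) ^ p) :=
    (hrpow.comp (hum.min (hum.comp hσmeas))).ennreal_ofReal
  -- null hyperplane and a.e. equality of complement and open side
  have hplane : volume {x : Euc d | (inner ℝ x h : ℝ) = a} = 0 := hyperplane_null h a hh
  have hcompl_ae : ((halfSpace h a)ᶜ : Set (Euc d)) =ᵐ[volume] ({x : Euc d | a < (inner ℝ x h : ℝ)} : Set (Euc d)) := by
    rw [ae_eq_set]
    constructor
    · refine measure_mono_null ?_ hplane
      rintro x ⟨hx1, hx2⟩
      have h1 : ¬ (inner ℝ x h : ℝ) < a := hx1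
      have h2 : ¬ a < (inner ℝ x h : ℝ) := hx2
      exact le_antisymm (not_lt.1 h2) (not_lt.1 h1)
    · refine measure_mono_null ?_ hplane
      rintro x ⟨hx1, hx2⟩
      have h1 : a < (inner ℝ x h : ℝ) := hx1
      have h2 : (inner ℝ x h : ℝ) < a := not_not.1 hx2
      exact absurd h1 (not_lt.2 h2.le)
  have hpreB : σ ⁻¹' {x : Euc d | a < (inner ℝ x h : ℝ)} = halfSpace h a := by
    ext x
    simp only [Set.mem_preimage, Set.mem_setOf_eq, halfSpace, hσdef, inner_reflH h a hh]
    constructor <;> intro hx <;> linarith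
  -- key computation over the whole space
  have key : (∫⁻ x, G x) = ∫⁻ x, F x := by
    have eH : ∫⁻ x in halfSpace h a, G x
        = ∫⁻ x in halfSpace h a, ENNReal.ofReal (max (u x) (u (σ x)) ^ p) := by
      refine setLIntegral_congr_fun hHmeas (fun x hx => ?_)
      have : (inner ℝ x h : ℝ) < a := hx
      simp only [hG, polFun, if_pos this, hσdef]
    have eHc : ∫⁻ x in (halfSpace h a)ᶜ, G x
        = ∫⁻ x in halfSpace h a, ENNReal.ofReal (min (u (σ x)) (u x) ^ p) := by
      rw [setLIntegral_congr hcompl_ae]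
      calc ∫⁻ x in {x : Euc d | a < (inner ℝ x h : ℝ)}, G x
          = ∫⁻ x in {x : Euc d | a < (inner ℝ x h : ℝ)},
              ENNReal.ofReal (min (u x) (u (σ x)) ^ p) := by
            refine setLIntegral_congr_fun hBmeas (fun x hx => ?_)
            have hxB : a < (inner ℝ x h : ℝ) := hx
            simp only [hG, polFun, if_neg (not_lt.2 hxB.le), hσdef]
        _ = ∫⁻ y in σ ⁻¹' {x : Euc d | a < (inner ℝ x h : ℝ)},
              ENNReal.ofReal (min (u (σ y)) (u (σ (σ y))) ^ p) :=
            (hσmp.setLIntegral_comp_preimage hBmeas humin).symm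
        _ = ∫⁻ y in halfSpace h a, ENNReal.ofReal (min (u (σ y)) (u y) ^ p) := by
            rw [hpreB]
            exact setLIntegral_congr_fun hHmeas (fun x _ => by rw [hσσ])
    calc ∫⁻ x, G x
        = (∫⁻ x in halfSpace h a, G x) + ∫⁻ x in (halfSpace h a)ᶜ, G x :=
          (lintegral_add_compl G hHmeas).symm
      _ = (∫⁻ x in halfSpace h a, ENNReal.ofReal (max (u x) (u (σ x)) ^ p))
          + ∫⁻ x in halfSpace h a, ENNReal.ofReal (min (u (σ x)) (u x) ^ p) := by
          rw [eH, eHc]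
      _ = ∫⁻ x in halfSpace h a,
            (ENNReal.ofReal (max (u x) (u (σ x)) ^ p)
              + ENNReal.ofReal (min (u (σ x)) (u x) ^ p)) := by
          rw [lintegral_add_left humax]
      _ = ∫⁻ x in halfSpace h a, (F x + F (σ x)) := by
          refine setLIntegral_congr_fun hHmeas (fun x _ => ?_)
          rw [min_comm, maxmin_rpow]
      _ = (∫⁻ x in halfSpace h a, F x) + ∫⁻ x in halfSpace h a, F (σ x) := by
          rw [lintegral_add_left hFmeas]
      _ = (∫⁻ x in halfSpace h a, F x) + ∫⁻ x in {x : Euc d | a < (inner ℝ x h : ℝ)}, F x := by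
          rw [← hpreB]
          exact congrArg (_ + ·) (hσmp.setLIntegral_comp_preimage hBmeas hFmeas)
      _ = (∫⁻ x in halfSpace h a, F x) + ∫⁻ x in (halfSpace h a)ᶜ, F x := by
          rw [setLIntegral_congr hcompl_ae]
      _ = ∫⁻ x, F x := lintegral_add_compl F hHmeas
  -- restrict to the sets
  have eG : (∫⁻ x in polSet h a Ω, G x) = ∫⁻ x, G x := by
    refine setLIntegral_of_zero_off hpolmeas fun x hx => ?_
    simp only [hG, hvanish x hx, Real.zero_rpow hp0, ENNReal.ofReal_zero]
  have eF : (∫⁻ x in Ω, F x) = ∫⁻ x, F x := by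
    refine setLIntegral_of_zero_off hΩ.measurableSet fun x hx => ?_
    simp only [hF, hu0 x hx, Real.zero_rpow hp0, ENNReal.ofReal_zero]
  have main : (∫⁻ x in polSet h a Ω, ENNReal.ofReal (polFun h a u x ^ p))
      = ∫⁻ x in Ω, ENNReal.ofReal (u x ^ p) := by
    calc (∫⁻ x in polSet h a Ω, G x) = ∫⁻ x, G x := eG
      _ = ∫⁻ x, F x := key
      _ = ∫⁻ x in Ω, F x := eF.symm
  exact ⟨hvanish, main.trans_lt huLp, main⟩
end
end

section
/- Let d ≥ 2, 0 < r < R, and 0 ≤ t < R − r. Set Ω_t = B_R(0) \ cl(B_r(t e₁)). Let H_a = {x = (x₁,x′) ∈ ℝ^d : x₁ < a} and P_a = P_{H_a}. Then P_a(Ω_t) = Ω_t for 0 ≤ a ≤ t, and P_a(Ω_t) = Ω_{2a−t} for t ≤ a < (R − r + t)/2. -/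
open MeasureTheory Metric Set ENNReal

noncomputable section

section AuxPolar
variable {d : ℕ} {e : Euc d}

lemma aux_refl_inner (he : (inner ℝ e e : ℝ) = 1) (a : ℝ) (x : Euc d) :
    (inner ℝ (reflH e a x) e : ℝ) = 2 * a - inner ℝ x e := by
  simp only [reflH, inner_sub_left, real_inner_smul_left, he]
  ring

lemma aux_refl_refl (he : (inner ℝ e e : ℝ) = 1) (a : ℝ) (x : Euc d) :
    reflH e a (reflH e a x) = x := by
  unfold reflH
  rw [show (inner ℝ (x - (2 * ((inner ℝ x e:ℝ) - a)) • e) e : ℝ) = 2*a - inner ℝ x e from by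
    simp only [inner_sub_left, real_inner_smul_left, he]; ring]
  module

lemma aux_dist_sq (he : (inner ℝ e e : ℝ) = 1) (c : ℝ) (x : Euc d) :
    dist x (c • e) ^ 2 = ‖x‖^2 - 2*c*(inner ℝ x e : ℝ) + c^2 := by
  rw [dist_eq_norm, ← real_inner_self_eq_norm_sq, ← real_inner_self_eq_norm_sq]
  simp only [inner_sub_left, inner_sub_right, real_inner_smul_left, real_inner_smul_right, he,
    real_inner_comm e x]
  ring

lemma aux_norm_e (he : (inner ℝ e e : ℝ) = 1) : ‖e‖ = 1 := by
  have h2 : ‖e‖^2 = 1 := by rw [← real_inner_self_eq_norm_sq, he]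
  have := congrArg Real.sqrt h2
  rwa [Real.sqrt_sq (norm_nonneg _), Real.sqrt_one] at this

lemma aux_dist_smul (he : (inner ℝ e e : ℝ) = 1) (c c' : ℝ) :
    dist (c • e) (c' • e) = |c - c'| := by
  rw [dist_eq_norm, ← sub_smul, norm_smul, aux_norm_e he, Real.norm_eq_abs, mul_one]

lemma aux_refl_dist (he : (inner ℝ e e : ℝ) = 1) (a c : ℝ) (x : Euc d) :
    dist (reflH e a x) (c • e) = dist x ((2*a - c) • e) := by
  have hv : reflH e a x - c • e =
      (x - (2*a - c) • e) - (2 * (inner ℝ (x - (2*a - c) • e) e : ℝ)) • e := by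
    rw [show (inner ℝ (x - (2*a - c) • e) e : ℝ) = (inner ℝ x e : ℝ) - (2*a - c) from by
      simp only [inner_sub_left, real_inner_smul_left, he]; ring]
    unfold reflH; module
  rw [dist_eq_norm, dist_eq_norm, hv]
  set v := x - (2*a - c) • e
  have h2 : ‖v - (2 * (inner ℝ v e : ℝ)) • e‖^2 = ‖v‖^2 := by
    rw [← real_inner_self_eq_norm_sq, ← real_inner_self_eq_norm_sq]
    simp only [inner_sub_left, inner_sub_right, real_inner_smul_left, real_inner_smul_right, he,
      real_inner_comm e v]
    ring
  have := congrArg Real.sqrt h2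
  rwa [Real.sqrt_sq (norm_nonneg _), Real.sqrt_sq (norm_nonneg _)] at this


lemma aux_mem_annulus {d : ℕ} {r R : ℝ} (hr : 0 < r) (c : ℝ) (x : Euc d) :
    x ∈ annulus d r R c ↔ dist x ((0:ℝ) • e1Vec d) < R ∧ r < dist x (c • e1Vec d) := by
  rw [annulus, closure_ball _ hr.ne', mem_diff, mem_ball, mem_closedBall, zero_smul]
  exact and_congr_right fun _ => not_le


lemma aux_mem_image (he : (inner ℝ e e : ℝ) = 1) {Ω : Set (Euc d)} {a : ℝ} {x : Euc d} :
    x ∈ reflH e a '' Ω ↔ reflH e a x ∈ Ω :=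
  ⟨by rintro ⟨y, hy, rfl⟩; rwa [aux_refl_refl he], fun h => ⟨_, h, aux_refl_refl he a x⟩⟩

lemma mem_polSet (he : (inner ℝ e e : ℝ) = 1) {a : ℝ} {Ω : Set (Euc d)} {x : Euc d} :
    x ∈ polSet e a Ω ↔
      ((x ∈ Ω ∨ reflH e a x ∈ Ω) ∧ (inner ℝ x e : ℝ) < a) ∨ (x ∈ Ω ∧ reflH e a x ∈ Ω) := by
  simp [polSet, halfSpace, aux_mem_image he, mem_union, mem_inter_iff, mem_setOf_eq]

lemma polSet_eq_of (he : (inner ℝ e e:ℝ) = 1) {a : ℝ} {Ω Ω' : Set (Euc d)}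
    (h1 : ∀ x, (inner ℝ x e:ℝ) < a → x ∈ Ω ∨ reflH e a x ∈ Ω → x ∈ Ω')
    (h2 : ∀ x, x ∈ Ω → reflH e a x ∈ Ω → x ∈ Ω')
    (h3 : ∀ x, (inner ℝ x e:ℝ) < a → x ∈ Ω' → x ∈ Ω ∨ reflH e a x ∈ Ω)
    (h4 : ∀ x, a ≤ (inner ℝ x e:ℝ) → x ∈ Ω' → x ∈ Ω ∧ reflH e a x ∈ Ω) :
    polSet e a Ω = Ω' := by
  ext x
  rw [mem_polSet he]
  constructor
  · rintro (⟨ho, hx⟩ | ⟨h5, h6⟩)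
    · exact h1 x hx ho
    · exact h2 x h5 h6
  · intro hx
    by_cases hlt : (inner ℝ x e:ℝ) < a
    · exact Or.inl ⟨h3 x hlt hx, hlt⟩
    · exact Or.inr (h4 x (not_lt.1 hlt) hx)

lemma lt_dist_mono {x : Euc d} {c c' ρ : ℝ} (hρ : 0 ≤ ρ)
    (h : ρ < dist x (c • e)) (hq : dist x (c • e)^2 ≤ dist x (c' • e)^2) :
    ρ < dist x (c' • e) := by
  nlinarith [dist_nonneg (x := x) (y := c' • e), dist_nonneg (x := x) (y := c • e)]

lemma dist_lt_mono {x : Euc d} {c c' R : ℝ} (h : dist x (c • e) < R)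
    (hq : dist x (c' • e)^2 ≤ dist x (c • e)^2) : dist x (c' • e) < R := by
  nlinarith [dist_nonneg (x := x) (y := c' • e), dist_nonneg (x := x) (y := c • e)]

end AuxPolar

/-- **Polarization of annular domains.**
For `Ω_t = B_R(0) \ cl(B_r(t e₁))`: `P_a(Ω_t) = Ω_t` for `0 ≤ a ≤ t`, and
`P_a(Ω_t) = Ω_{2a-t}` for `t ≤ a < (R - r + t)/2`. -/
theorem polSet_annulus (d : ℕ) (hd : 2 ≤ d) (r R t a : ℝ)
    (hr : 0 < r) (hrR : r < R) (ht0 : 0 ≤ t) (ht : t < R - r) :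
    (0 ≤ a → a ≤ t → polSet (e1Vec d) a (annulus d r R t) = annulus d r R t) ∧
    (t ≤ a → a < (R - r + t) / 2 →
      polSet (e1Vec d) a (annulus d r R t) = annulus d r R (2 * a - t)) := by
  have hd0 : 0 < d := by omega
  have he : (inner ℝ (e1Vec d) (e1Vec d) : ℝ) = 1 := by
    have h0 : ∀ i : Fin d, ((i:ℕ) = 0) = (i = ⟨0, hd0⟩) := by
      intro i; simp [Fin.ext_iff]
    rw [PiLp.inner_apply]
    simp [e1Vec, RCLike.inner_apply, h0]
  have memA : ∀ (c : ℝ) (x : Euc d), x ∈ annulus d r R c ↔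
      dist x ((0:ℝ) • e1Vec d) < R ∧ r < dist x (c • e1Vec d) := aux_mem_annulus hr
  have memRefl : ∀ (aa c : ℝ) (x : Euc d), reflH (e1Vec d) aa x ∈ annulus d r R c ↔
      dist x ((2*aa - 0) • e1Vec d) < R ∧ r < dist x ((2*aa - c) • e1Vec d) := by
    intro aa c x
    rw [aux_mem_annulus hr, aux_refl_dist he, aux_refl_dist he]
  constructor
  · intro ha0 hat
    refine polSet_eq_of he ?_ ?_ ?_ ?_
    · intro x hs hor
      rcases hor with h | h
      · exact h
      · rw [memRefl] at h
        rw [memA]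
        refine ⟨dist_lt_mono h.1 ?_, lt_dist_mono hr.le h.2 ?_⟩
        · nlinarith [aux_dist_sq he (2*a - 0) x, aux_dist_sq he 0 x]
        · nlinarith [aux_dist_sq he (2*a - t) x, aux_dist_sq he t x]
    · intro x h _; exact h
    · intro x _ h; exact Or.inl h
    · intro x hs h
      rw [memA] at h
      refine ⟨(memA t x).2 h, (memRefl a t x).2 ⟨dist_lt_mono h.1 ?_, lt_dist_mono hr.le h.2 ?_⟩⟩
      · nlinarith [aux_dist_sq he (2*a - 0) x, aux_dist_sq he 0 x]
      · nlinarith [aux_dist_sq he (2*a - t) x, aux_dist_sq he t x]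
  · intro hta ha2
    have ha0 : 0 ≤ a := le_trans ht0 hta
    refine polSet_eq_of he ?_ ?_ ?_ ?_
    · intro x hs hor
      rw [memA]
      rcases hor with h | h
      · rw [memA] at h
        exact ⟨h.1, lt_dist_mono hr.le h.2 (by
          nlinarith [aux_dist_sq he t x, aux_dist_sq he (2*a - t) x])⟩
      · rw [memRefl] at h
        exact ⟨dist_lt_mono h.1 (by
          nlinarith [aux_dist_sq he (2*a - 0) x, aux_dist_sq he 0 x]), h.2⟩
    · intro x hx hσ
      rw [memA] at hx ⊢
      rw [memRefl] at hσ
      exact ⟨hx.1, hσ.2⟩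
    · intro x hs hx
      rw [memA] at hx
      by_cases hc : r < dist x (t • e1Vec d)
      · exact Or.inl ((memA t x).2 ⟨hx.1, hc⟩)
      · right
        rw [memRefl]
        refine ⟨?_, hx.2⟩
        push_neg at hc
        have htri := dist_triangle x (t • e1Vec d) ((2*a - 0) • e1Vec d)
        have hde : dist (t • e1Vec d) ((2*a - 0) • e1Vec d) = |t - (2*a - 0)| :=
          aux_dist_smul he t (2*a - 0)
        have habs : |t - (2*a - 0)| = 2*a - t := by
          rw [abs_of_nonpos (by linarith)]; ring
        rw [habs] at hde
        linarith
    · intro x hs hx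
      rw [memA] at hx
      refine ⟨(memA t x).2 ⟨hx.1, lt_dist_mono hr.le hx.2 ?_⟩,
        (memRefl a t x).2 ⟨dist_lt_mono hx.1 ?_, hx.2⟩⟩
      · nlinarith [aux_dist_sq he (2*a - t) x, aux_dist_sq he t x]
      · nlinarith [aux_dist_sq he (2*a - 0) x, aux_dist_sq he 0 x]
end
end

section
/- Let d ≥ 1, p ∈ (1,∞), s ∈ (0,1), let H be a polarizer in ℝ^d, let u : ℝ^d → ℝ, and set v = P_H(u). Then for all x, y ∈ H, writing x̄ = σ_H(x) and ȳ = σ_H(y): |u(x)−u(y)|^p |x−y|^{−(d+sp)} + |u(x̄)−u(y)|^p |x̄−y|^{−(d+sp)} + |u(x)−u(ȳ)|^p |x−ȳ|^{−(d+sp)} + |u(x̄)−u(ȳ)|^p |x̄−ȳ|^{−(d+sp)} ≥ |v(x)−v(y)|^p |x−y|^{−(d+sp)} + |v(x̄)−v(y)|^p |x̄−y|^{−(d+sp)} + |v(x)−v(ȳ)|^p |x−ȳ|^{−(d+sp)} + |v(x̄)−v(ȳ)|^p |x̄−ȳ|^{−(d+sp)}. -/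
open MeasureTheory Metric Set ENNReal

noncomputable section

section PolarizationAux

open Set

private lemma pol_convexOn_abs_rpow {p : ℝ} (hp : 1 ≤ p) :
    ConvexOn ℝ (univ : Set ℝ) (fun t : ℝ => |t| ^ p) := by
  have himg : (fun t : ℝ => |t|) '' (univ : Set ℝ) = Ici 0 := by
    ext t
    simp only [image_univ, mem_range, mem_Ici]
    constructor
    · rintro ⟨s, rfl⟩; exact abs_nonneg s
    · intro ht; exact ⟨t, abs_of_nonneg ht⟩
  have hg : ConvexOn ℝ ((fun t : ℝ => |t|) '' univ) (fun x : ℝ => x ^ p) := by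
    rw [himg]; exact convexOn_rpow hp
  have hg' : MonotoneOn (fun x : ℝ => x ^ p) ((fun t : ℝ => |t|) '' univ) := by
    rw [himg]
    intro x hx y _ hxy
    exact Real.rpow_le_rpow hx hxy (le_trans zero_le_one hp)
  have habs : ConvexOn ℝ (univ : Set ℝ) (fun t : ℝ => |t|) := by
    exact convexOn_univ_norm (E := ℝ)
  exact hg.comp habs hg'

private lemma pol_convex_four {f : ℝ → ℝ} (hf : ConvexOn ℝ (univ : Set ℝ) f)
    {a b c d : ℝ} (hab : a ≤ b) (hbd : b ≤ d) (hsum : a + d = b + c) :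
    f b + f c ≤ f a + f d := by
  rcases eq_or_lt_of_le (hab.trans hbd) with h | h
  · have hb : b = a := le_antisymm (h ▸ hbd) hab
    have hc : c = d := by linarith
    rw [hb, hc]
  · have hda : 0 < d - a := by linarith
    have hl0 : 0 ≤ (d - b) / (d - a) := div_nonneg (by linarith) hda.le
    have hm0 : 0 ≤ (b - a) / (d - a) := div_nonneg (by linarith) hda.le
    have hlm : (d - b) / (d - a) + (b - a) / (d - a) = 1 := by field_simp; ring
    have hb' : ((d - b) / (d - a)) • a + ((b - a) / (d - a)) • d = b := by
      simp only [smul_eq_mul]; field_simp; ring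
    have hc' : ((b - a) / (d - a)) • a + ((d - b) / (d - a)) • d = c := by
      simp only [smul_eq_mul]; field_simp; nlinarith [hsum]
    have h1 := hf.2 (mem_univ a) (mem_univ d) hl0 hm0 hlm
    have h2 := hf.2 (mem_univ a) (mem_univ d) hm0 hl0 (by linarith)
    rw [hb'] at h1
    rw [hc'] at h2
    simp only [smul_eq_mul] at h1 h2
    have h3 : (d - b) / (d - a) * f a + (b - a) / (d - a) * f a = f a := by
      rw [← add_mul, hlm, one_mul]
    have h4 : (d - b) / (d - a) * f d + (b - a) / (d - a) * f d = f d := by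
      rw [← add_mul, hlm, one_mul]
    linarith

private lemma pol_rearr {p A B C D : ℝ} (hp : 1 ≤ p) (hBA : B ≤ A) (hCD : C ≤ D) :
    |A - D| ^ p + |B - C| ^ p ≤ |A - C| ^ p + |B - D| ^ p := by
  have := pol_convex_four (pol_convexOn_abs_rpow hp)
    (a := B - D) (b := A - D) (c := B - C) (d := A - C)
    (by linarith) (by linarith) (by ring)
  linarith

private lemma pol_keyAux {p A B C D α β : ℝ} (hp : 1 ≤ p) (hBA : B ≤ A)
    (hαβ : β ≤ α) :
    α * |max A B - max C D| ^ p + β * |min A B - max C D| ^ p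
      + β * |max A B - min C D| ^ p + α * |min A B - min C D| ^ p
    ≤ α * |A - C| ^ p + β * |B - C| ^ p + β * |A - D| ^ p + α * |B - D| ^ p := by
  rcases le_total D C with hDC | hCD
  · rw [max_eq_left hBA, min_eq_right hBA, max_eq_left hDC, min_eq_right hDC]
  · rw [max_eq_left hBA, min_eq_right hBA, max_eq_right hCD, min_eq_left hCD]
    have hre := pol_rearr hp hBA hCD
    nlinarith [mul_nonneg (sub_nonneg.2 hαβ) (sub_nonneg.2 hre)]

private lemma pol_key {p : ℝ} (hp : 1 ≤ p) (A B C D : ℝ) {α β : ℝ}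
    (hαβ : β ≤ α) :
    α * |max A B - max C D| ^ p + β * |min A B - max C D| ^ p
      + β * |max A B - min C D| ^ p + α * |min A B - min C D| ^ p
    ≤ α * |A - C| ^ p + β * |B - C| ^ p + β * |A - D| ^ p + α * |B - D| ^ p := by
  rcases le_total B A with hBA | hAB
  · exact pol_keyAux hp hBA hαβ
  · have := pol_keyAux (A := B) (B := A) (C := D) (D := C) hp hAB hαβ
    rw [max_comm B A, min_comm B A, max_comm D C, min_comm D C] at this
    linarith

private lemma pol_abs_min_max (A B : ℝ) : |min A B - max A B| = |A - B| := by
  rcases le_total A B with h' | h'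
  · rw [min_eq_left h', max_eq_right h']
  · rw [min_eq_right h', max_eq_left h', abs_sub_comm]

private lemma pol_abs_max_min (A B : ℝ) : |max A B - min A B| = |A - B| := by
  rcases le_total A B with h' | h'
  · rw [min_eq_left h', max_eq_right h', abs_sub_comm]
  · rw [min_eq_right h', max_eq_left h']

section geom
variable {d : ℕ} {h : Euc d} {a : ℝ} (hh : ‖h‖ = 1)
include hh

private lemma pol_inner_hh : (inner ℝ h h : ℝ) = 1 := by
  rw [real_inner_self_eq_norm_mul_norm, hh]; norm_num

private lemma pol_inner_reflH (x : Euc d) :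
    (inner ℝ (reflH h a x) h : ℝ) = 2 * a - (inner ℝ x h : ℝ) := by
  rw [reflH, inner_sub_left, real_inner_smul_left, pol_inner_hh hh]; ring

private lemma pol_reflH_invol (x : Euc d) : reflH h a (reflH h a x) = x := by
  unfold reflH
  rw [inner_sub_left, real_inner_smul_left, pol_inner_hh hh]
  match_scalars <;> ring

omit hh in
private lemma pol_norm_eq_of_sq_eq {E : Type*} [NormedAddCommGroup E] {v w : E}
    (hvw : ‖v‖ ^ 2 = ‖w‖ ^ 2) : ‖v‖ = ‖w‖ := by
  nlinarith [norm_nonneg v, norm_nonneg w]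

private lemma pol_norm_refl_sub_refl (x y : Euc d) :
    ‖reflH h a x - reflH h a y‖ = ‖x - y‖ := by
  apply pol_norm_eq_of_sq_eq
  have hxy : reflH h a x - reflH h a y
      = (x - y) - (2 * ((inner ℝ (x - y) h : ℝ))) • h := by
    rw [reflH, reflH, inner_sub_left]
    match_scalars <;> ring
  rw [hxy, norm_sub_sq_real, real_inner_smul_right, norm_smul, mul_pow,
    hh, Real.norm_eq_abs, sq_abs]
  ring

private lemma pol_norm_refl_sub (x y : Euc d) :
    ‖x - reflH h a y‖ = ‖reflH h a x - y‖ := by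
  conv_lhs => rw [← pol_norm_refl_sub_refl hh x (reflH h a y), pol_reflH_invol hh]

private lemma pol_norm_sq_refl_sub (x y : Euc d) :
    ‖reflH h a x - y‖ ^ 2
      = ‖x - y‖ ^ 2 + 4 * (((inner ℝ x h : ℝ) - a) * ((inner ℝ y h : ℝ) - a)) := by
  have hxy : reflH h a x - y = (x - y) - (2 * ((inner ℝ x h : ℝ) - a)) • h := by
    rw [reflH]; abel
  rw [hxy, norm_sub_sq_real, real_inner_smul_right, norm_smul, mul_pow,
    hh, Real.norm_eq_abs, sq_abs, inner_sub_left]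
  ring

private lemma pol_norm_le_refl {x y : Euc d} (hx : x ∈ halfSpace h a)
    (hy : y ∈ halfSpace h a) : ‖x - y‖ ≤ ‖reflH h a x - y‖ := by
  have hx' : (inner ℝ x h : ℝ) - a < 0 := sub_neg.2 hx
  have hy' : (inner ℝ y h : ℝ) - a < 0 := sub_neg.2 hy
  have := pol_norm_sq_refl_sub (a := a) hh x y
  nlinarith [norm_nonneg (x - y), norm_nonneg (reflH h a x - y),
    mul_pos_of_neg_of_neg hx' hy']

end geom

end PolarizationAux

/-- **Pointwise four-term inequality for polarization.**
For `x, y ∈ H`, writing `x̄ = σ_H x`, `ȳ = σ_H y` and `v = P_H u`, the sum of the four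
Gagliardo integrand terms for `v` is bounded by the one for `u`. -/
theorem four_term_inequality (d : ℕ) (hd : 1 ≤ d) (s p : ℝ)
    (hp : 1 < p) (hs : s ∈ Set.Ioo (0 : ℝ) 1)
    (h : Euc d) (a : ℝ) (hh : ‖h‖ = 1) (u : Euc d → ℝ)
    (x y : Euc d) (hx : x ∈ halfSpace h a) (hy : y ∈ halfSpace h a) :
    |polFun h a u x - polFun h a u y| ^ p / ‖x - y‖ ^ ((d : ℝ) + s * p)
      + |polFun h a u (reflH h a x) - polFun h a u y| ^ p
          / ‖reflH h a x - y‖ ^ ((d : ℝ) + s * p)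
      + |polFun h a u x - polFun h a u (reflH h a y)| ^ p
          / ‖x - reflH h a y‖ ^ ((d : ℝ) + s * p)
      + |polFun h a u (reflH h a x) - polFun h a u (reflH h a y)| ^ p
          / ‖reflH h a x - reflH h a y‖ ^ ((d : ℝ) + s * p)
    ≤ |u x - u y| ^ p / ‖x - y‖ ^ ((d : ℝ) + s * p)
      + |u (reflH h a x) - u y| ^ p / ‖reflH h a x - y‖ ^ ((d : ℝ) + s * p)
      + |u x - u (reflH h a y)| ^ p / ‖x - reflH h a y‖ ^ ((d : ℝ) + s * p)
      + |u (reflH h a x) - u (reflH h a y)| ^ p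
          / ‖reflH h a x - reflH h a y‖ ^ ((d : ℝ) + s * p) := by
  have hp0 : (0 : ℝ) < p := lt_trans one_pos hp
  have he : (0 : ℝ) < (d : ℝ) + s * p := by
    have : (0 : ℝ) < s * p := mul_pos hs.1 hp0
    positivity
  have hxlt : (inner ℝ x h : ℝ) < a := hx
  have hylt : (inner ℝ y h : ℝ) < a := hy
  have hxbar_not : ¬ ((inner ℝ (reflH h a x) h : ℝ) < a) := by
    rw [pol_inner_reflH hh]; push_neg; linarith
  have hybar_not : ¬ ((inner ℝ (reflH h a y) h : ℝ) < a) := by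
    rw [pol_inner_reflH hh]; push_neg; linarith
  have hpx : polFun h a u x = max (u x) (u (reflH h a x)) := if_pos hxlt
  have hpy : polFun h a u y = max (u y) (u (reflH h a y)) := if_pos hylt
  have hpxb : polFun h a u (reflH h a x) = min (u x) (u (reflH h a x)) := by
    simp only [polFun]
    rw [if_neg hxbar_not, pol_reflH_invol hh, min_comm]
  have hpyb : polFun h a u (reflH h a y) = min (u y) (u (reflH h a y)) := by
    simp only [polFun]
    rw [if_neg hybar_not, pol_reflH_invol hh, min_comm]
  rw [hpx, hpy, hpxb, hpyb, pol_norm_refl_sub_refl hh, pol_norm_refl_sub hh]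
  rcases eq_or_ne x y with rfl | hne
  · have hp0' : p ≠ 0 := ne_of_gt hp0
    rw [pol_abs_min_max (u x) (u (reflH h a x)),
      pol_abs_max_min (u x) (u (reflH h a x)),
      abs_sub_comm (u (reflH h a x)) (u x)]
    simp [sub_self, abs_zero, Real.zero_rpow hp0']
  · have hr : 0 < ‖x - y‖ := by
      rw [norm_sub_pos_iff]; exact hne
    have hrR : ‖x - y‖ ≤ ‖reflH h a x - y‖ := pol_norm_le_refl hh hx hy
    have hre : ‖x - y‖ ^ ((d : ℝ) + s * p) ≤ ‖reflH h a x - y‖ ^ ((d : ℝ) + s * p) :=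
      Real.rpow_le_rpow hr.le hrR he.le
    have hrp : (0 : ℝ) < ‖x - y‖ ^ ((d : ℝ) + s * p) := Real.rpow_pos_of_pos hr _
    simp only [div_eq_inv_mul]
    exact pol_key hp.le (u x) (u (reflH h a x)) (u y) (u (reflH h a y))
      (inv_anti₀ hrp hre)
end
end
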